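/- Let α be a type and h : Finset α → ℝ a set function. If the sequence function f defined on lists over α by f(L) = h(the finite set of elements occurring in L) is ordered-submodular, then h is monotone and submodular. -/

import Mathlib

/-- A sequence function `f : List α → ℝ` is **ordered-submodular** if for all lists
`A, B` and elements `s, s̄`:
`f(A ++ [s]) − f(A) ≥ f(A ++ [s] ++ B) − f(A ++ [s̄] ++ B)`. -/
def OrderedSubmodular {α : Type*} (f : List α → ℝ) : Prop :=
  ∀ (A B : List α) (s sbar : α),
    f (A ++ [s] ++ B) - f (A ++ [sbar] ++ B) ≤ f (A ++ [s]) - f A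

/-- A set function is monotone: `h A ≤ h B` whenever `A ⊆ B`. -/
def SetMonotone {α : Type*} (h : Finset α → ℝ) : Prop :=
  ∀ A B : Finset α, A ⊆ B → h A ≤ h B

/-- A set function is submodular:
`h(insert x A) − h(A) ≥ h(insert x B) − h(B)` whenever `A ⊆ B`. -/
def SetSubmodular {α : Type*} [DecidableEq α] (h : Finset α → ℝ) : Prop :=
  ∀ A B : Finset α, A ⊆ B → ∀ x : α,
    h (insert x B) - h B ≤ h (insert x A) - h A

/-- if the sequence function `L ↦ h(L.toFinset)` is ordered-submodular,
then the set function `h` is monotone and submodular. -/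
theorem monotone_submodular_of_orderedSubmodular {α : Type*} [DecidableEq α]
    (h : Finset α → ℝ)
    (hf : OrderedSubmodular (fun L : List α => h L.toFinset)) :
    SetMonotone h ∧ SetSubmodular h := by
  have hins : ∀ (S : Finset α) (s : α), h S ≤ h (insert s S) := by
    intro S s
    have := hf S.toList [] s s
    simp only [List.append_nil, List.toFinset_append, List.toFinset_cons,
      List.toFinset_nil, insert_empty_eq, Finset.toList_toFinset, sub_self] at this
    have e : S ∪ {s} = insert s S := by
      rw [Finset.union_comm]; exact (Finset.insert_eq s S).symm
    rw [e] at this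
    linarith
  constructor
  · intro A B hAB
    have key : ∀ C : Finset α, h A ≤ h (A ∪ C) := by
      intro C
      induction C using Finset.induction_on with
      | empty => simp
      | @insert c C _ ih =>
        calc h A ≤ h (A ∪ C) := ih
        _ ≤ h (insert c (A ∪ C)) := hins _ _
        _ = h (A ∪ insert c C) := by rw [Finset.union_insert]
    have : A ∪ B = B := Finset.union_eq_right.mpr hAB
    simpa [this] using key B
  · intro A B hAB x
    rcases eq_or_ne B ∅ with rfl | hB
    · have : A = ∅ := Finset.subset_empty.mp hAB
      simp [this]
    · obtain ⟨t, ht⟩ := Finset.nonempty_iff_ne_empty.mpr hB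
      have := hf A.toList B.toList x t
      simp only [List.toFinset_append, List.toFinset_cons, List.toFinset_nil,
        insert_empty_eq, Finset.toList_toFinset] at this
      have e1 : A ∪ {x} ∪ B = insert x B := by
        rw [Finset.union_comm A {x}, Finset.union_assoc,
          Finset.union_eq_right.mpr hAB]
        simp [Finset.insert_eq, -Finset.singleton_union]
      have e2 : A ∪ {t} ∪ B = B := by
        rw [Finset.union_assoc,
          Finset.union_eq_right.mpr (Finset.singleton_subset_iff.mpr ht),
          Finset.union_eq_right.mpr hAB]
      have e3 : A ∪ {x} = insert x A := by
        rw [Finset.union_comm]; simp [Finset.insert_eq, -Finset.singleton_union]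
      rw [e1, e2, e3] at this
      exact this
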